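/- For every integer m ≥ 1 and every real b with 0 < b < 1, the inequality -ln(1-x) ≤ x + x²/2 + x³/3 + ... + xᵐ/m + a·|x|^(m+1) holds for all x with |x| ≤ b when a = θ_m(b) := Σ_{i=0}^∞ bⁱ/(i+m+1), and θ_m(b) is the smallest such a (i.e., for any a < θ_m(b) the inequality fails for some x with |x| ≤ b). -/

import Mathlib

open Finset

/-- `θ_m(b) = ∑_{i=0}^∞ bⁱ/(i+m+1)`. -/
noncomputable def theta (m : ℕ) (b : ℝ) : ℝ := ∑' i : ℕ, b ^ i / ((i : ℝ) + m + 1)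

lemma theta_hasSum (m : ℕ) (b : ℝ) (hb0 : 0 < b) (hb1 : b < 1) :
    HasSum (fun i : ℕ => b ^ i / ((i : ℝ) + m + 1)) (theta m b) := by
  have hs : Summable (fun i : ℕ => b ^ i / ((i : ℝ) + m + 1)) := by
    apply Summable.of_nonneg_of_le (fun i => by positivity) (fun i => ?_)
      (summable_geometric_of_lt_one hb0.le hb1)
    have h1 : (0:ℝ) ≤ (i:ℝ) := Nat.cast_nonneg i
    have h2 : (0:ℝ) ≤ (m:ℝ) := Nat.cast_nonneg m
    exact div_le_self (by positivity) (by linarith)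
  exact hs.hasSum

lemma tail_hasSum (m : ℕ) (x : ℝ) (hx : |x| < 1) :
    HasSum (fun i : ℕ => x ^ (i + m + 1) / ((i : ℝ) + m + 1))
      (-Real.log (1 - x) - ∑ i ∈ Finset.range m, x ^ (i + 1) / ((i : ℝ) + 1)) := by
  have h := Real.hasSum_pow_div_log_of_abs_lt_one hx
  have this : HasSum (fun n : ℕ => x ^ (n + m + 1) / (((n + m : ℕ) : ℝ) + 1))
      (-Real.log (1 - x) - ∑ i ∈ Finset.range m, x ^ (i + 1) / ((i : ℝ) + 1)) :=
    (hasSum_nat_add_iff (f := fun n : ℕ => x ^ (n + 1) / ((n : ℝ) + 1)) m).mpr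
      (by simpa using h)
  convert this using 2 with i
  push_cast
  ring_nf

theorem stmt_0 (m : ℕ) (hm : 1 ≤ m) (b : ℝ) (hb0 : 0 < b) (hb1 : b < 1) :
    (∀ x : ℝ, |x| ≤ b →
      -Real.log (1 - x) ≤ (∑ k ∈ Finset.Icc 1 m, x ^ k / (k : ℝ))
        + theta m b * |x| ^ (m + 1)) ∧
    (∀ a : ℝ, a < theta m b → ∃ x : ℝ, |x| ≤ b ∧
      (∑ k ∈ Finset.Icc 1 m, x ^ k / (k : ℝ)) + a * |x| ^ (m + 1)
        < -Real.log (1 - x)) := by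
  have hθ := theta_hasSum m b hb0 hb1
  have hIcc : ∀ x : ℝ, (∑ k ∈ Finset.Icc 1 m, x ^ k / (k : ℝ))
      = ∑ i ∈ Finset.range m, x ^ (i + 1) / ((i : ℝ) + 1) := by
    intro x
    rw [show Finset.Icc 1 m = Finset.Ico 1 (m + 1) by rfl, Finset.sum_Ico_eq_sum_range]
    simp only [Nat.add_sub_cancel]
    apply Finset.sum_congr rfl
    intro i _
    push_cast
    ring_nf
  have key : ∀ x : ℝ, |x| ≤ b →
      -Real.log (1 - x) - ∑ i ∈ Finset.range m, x ^ (i + 1) / ((i : ℝ) + 1)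
        ≤ |x| ^ (m + 1) * theta m b := by
    intro x hx
    have hx1 : |x| < 1 := lt_of_le_of_lt hx hb1
    refine hasSum_le ?_ (tail_hasSum m x hx1) (hθ.mul_left (|x| ^ (m + 1)))
    intro i
    have hd : (0:ℝ) < (i : ℝ) + m + 1 := by positivity
    rw [mul_div_assoc']
    apply div_le_div_of_nonneg_right ?_ hd.le |>.trans_eq rfl
    calc x ^ (i + m + 1) ≤ |x ^ (i + m + 1)| := le_abs_self _
      _ = |x| ^ (m + 1) * |x| ^ i := by rw [abs_pow]; ring
      _ ≤ |x| ^ (m + 1) * b ^ i := by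
          apply mul_le_mul_of_nonneg_left (pow_le_pow_left₀ (abs_nonneg x) hx i) (by positivity)
  constructor
  · intro x hx
    have := key x hx
    rw [hIcc x]
    linarith [this, mul_comm (|x| ^ (m + 1)) (theta m b)]
  · intro a ha
    refine ⟨b, le_of_eq (abs_of_pos hb0), ?_⟩
    have hb : |b| < 1 := by rw [abs_of_pos hb0]; exact hb1
    have htail := tail_hasSum m b hb
    have heq : HasSum (fun i : ℕ => b ^ (i + m + 1) / ((i : ℝ) + m + 1))
        (b ^ (m + 1) * theta m b) := by
      have := hθ.mul_left (b ^ (m + 1))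
      convert this using 2 with i
      · rfl
      ring
    have := htail.unique heq
    rw [hIcc b, abs_of_pos hb0]
    have hbpow : (0:ℝ) < b ^ (m + 1) := by positivity
    nlinarith [this]
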